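/- Let A ∈ ℝ^{m×n}, let M ∈ ℝ^{n×n} be symmetric positive definite, and let S ∈ ℝ^{n×p}. Then the matrix M^{1/2} Z_S M^{1/2} is idempotent, i.e. (M^{1/2} Z_S M^{1/2})^2 = M^{1/2} Z_S M^{1/2}; consequently every eigenvalue of M^{1/2} Z_S M^{1/2} is 0 or 1. -/

import Mathlib

open Matrix

-- The Moore–Penrose pseudoinverse of a real matrix, defined via the four
-- Penrose conditions (which have a unique solution for every real matrix).
open Classical in
noncomputable def mpinv {k l : Type*} [Fintype k] [Fintype l] (B : Matrix k l ℝ) :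
    Matrix l k ℝ :=
  if h : ∃ X : Matrix l k ℝ,
      B * X * B = B ∧ X * B * X = X ∧ (B * X)ᵀ = B * X ∧ (X * B)ᵀ = X * B
  then h.choose else 0

/-- `P_S = I - (AS)†(AS)`, the orthogonal projection onto `ker(AS)`. -/
noncomputable def Pmat {m n p : ℕ} (A : Matrix (Fin m) (Fin n) ℝ)
    (S : Matrix (Fin n) (Fin p) ℝ) : Matrix (Fin p) (Fin p) ℝ :=
  1 - mpinv (A * S) * (A * S)

/-- `Z_S = S P_S (P_Sᵀ Sᵀ M S P_S)† P_Sᵀ Sᵀ`. -/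
noncomputable def Zmat {m n p : ℕ} (A : Matrix (Fin m) (Fin n) ℝ)
    (M : Matrix (Fin n) (Fin n) ℝ) (S : Matrix (Fin n) (Fin p) ℝ) :
    Matrix (Fin n) (Fin n) ℝ :=
  S * Pmat A S * mpinv ((Pmat A S)ᵀ * Sᵀ * M * S * Pmat A S) * (Pmat A S)ᵀ * Sᵀ

/-- The gradient of `f : ℝ^n → ℝ`, as a vector of partial derivatives. -/
noncomputable def gradv {n : ℕ} (f : (Fin n → ℝ) → ℝ) (x : Fin n → ℝ) : Fin n → ℝ :=
  fun i => fderiv ℝ f x (Pi.single i 1)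

/-- The square root of a positive semidefinite matrix, as `Matrix.PosSemidef.sqrt` was defined
in the older Mathlib (removed since). -/
noncomputable def posSemidefSqrt {n : Type*} [Fintype n] [DecidableEq n] {A : Matrix n n ℝ}
    (hA : A.PosSemidef) : Matrix n n ℝ :=
  hA.isHermitian.eigenvectorUnitary.1 * diagonal ((↑) ∘ (√·) ∘ hA.isHermitian.eigenvalues) *
  (star hA.isHermitian.eigenvectorUnitary : Matrix n n ℝ)

lemma posSemidefSqrt_mul_self {n : Type*} [Fintype n] [DecidableEq n] {A : Matrix n n ℝ}
    (hA : A.PosSemidef) : posSemidefSqrt hA * posSemidefSqrt hA = A := by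
  set U : Matrix n n ℝ := (hA.isHermitian.eigenvectorUnitary : Matrix n n ℝ) with hU
  have hUU : star U * U = 1 := Unitary.coe_star_mul_self hA.isHermitian.eigenvectorUnitary
  have hAeq : A = U * diagonal hA.isHermitian.eigenvalues * star U := by
    have := hA.isHermitian.spectral_theorem
    simpa using this
  have hf : ((↑) ∘ (√·) ∘ hA.isHermitian.eigenvalues : n → ℝ) * ((↑) ∘ (√·) ∘ hA.isHermitian.eigenvalues)
      = hA.isHermitian.eigenvalues := by
    funext i
    simp [Real.mul_self_sqrt (hA.eigenvalues_nonneg i)]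
  calc posSemidefSqrt hA * posSemidefSqrt hA
      = U * (diagonal ((↑) ∘ (√·) ∘ hA.isHermitian.eigenvalues) * (star U * U) *
          diagonal ((↑) ∘ (√·) ∘ hA.isHermitian.eigenvalues)) * star U := by
        simp only [posSemidefSqrt, hU, Matrix.mul_assoc]
    _ = A := by
        rw [hUU, Matrix.mul_one, diagonal_mul_diagonal', ← Pi.mul_def, hf]
        exact hAeq.symm

lemma posSemidefSqrt_conjTranspose {n : Type*} [Fintype n] [DecidableEq n] {A : Matrix n n ℝ}
    (hA : A.PosSemidef) : (posSemidefSqrt hA)ᴴ = posSemidefSqrt hA := by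
  simp only [posSemidefSqrt, Matrix.conjTranspose_mul, Matrix.diagonal_conjTranspose, Matrix.star_eq_conjTranspose,
    Matrix.conjTranspose_conjTranspose, Matrix.mul_assoc, star_trivial]

lemma exists_penrose_of_hermitian {k : ℕ} (N : Matrix (Fin k) (Fin k) ℝ)
    (hN : N.IsHermitian) :
    ∃ X : Matrix (Fin k) (Fin k) ℝ,
      N * X * N = N ∧ X * N * X = X ∧ (N * X)ᵀ = N * X ∧ (X * N)ᵀ = X * N := by
  classical
  set U : Matrix (Fin k) (Fin k) ℝ := (hN.eigenvectorUnitary : Matrix (Fin k) (Fin k) ℝ) with hU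
  have hUU : star U * U = 1 := Unitary.coe_star_mul_self hN.eigenvectorUnitary
  set e : Fin k → ℝ := hN.eigenvalues with he
  set d : Fin k → ℝ := fun i => if e i = 0 then 0 else (e i)⁻¹ with hd
  have hNeq : N = U * diagonal e * star U := by
    have := hN.spectral_theorem
    simpa using this
  have key : ∀ f g : Fin k → ℝ,
      (U * diagonal f * star U) * (U * diagonal g * star U) = U * diagonal (f * g) * star U := by
    intro f g
    calc (U * diagonal f * star U) * (U * diagonal g * star U)
        = U * (diagonal f * (star U * U) * diagonal g) * star U := by
          simp only [Matrix.mul_assoc]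
      _ = U * diagonal (f * g) * star U := by
          rw [hUU, Matrix.mul_one, diagonal_mul_diagonal]
          rfl
  have hed : e * d * e = e := by
    funext i
    simp only [Pi.mul_apply, hd]
    by_cases h : e i = 0 <;> simp [h]
  have hde : d * e * d = d := by
    funext i
    simp only [Pi.mul_apply, hd]
    by_cases h : e i = 0 <;> simp [h]
  have hstar : ∀ B : Matrix (Fin k) (Fin k) ℝ, star B = Bᵀ := by
    intro B; ext i j; simp [Matrix.star_apply]
  have hsymm : ∀ f : Fin k → ℝ, (U * diagonal f * star U)ᵀ = U * diagonal f * star U := by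
    intro f
    rw [hstar U]
    simp [Matrix.transpose_mul, Matrix.diagonal_transpose, Matrix.mul_assoc]
  refine ⟨U * diagonal d * star U, ?_, ?_, ?_, ?_⟩
  · rw [hNeq, key, key, hed]
  · rw [hNeq, key, key, hde]
  · rw [hNeq, key, hsymm]
  · rw [hNeq, key, hsymm]

lemma mpinv_spec_of_symm {k : ℕ} (N : Matrix (Fin k) (Fin k) ℝ) (hN : Nᵀ = N) :
    N * mpinv N * N = N ∧ mpinv N * N * mpinv N = mpinv N ∧
      (N * mpinv N)ᵀ = N * mpinv N ∧ (mpinv N * N)ᵀ = mpinv N * N := by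
  classical
  have hherm : N.IsHermitian := by
    have : Nᴴ = N := by
      ext i j
      have := congrFun (congrFun hN i) j
      simpa [Matrix.conjTranspose_apply, Matrix.transpose_apply] using this
    exact this
  have h := exists_penrose_of_hermitian N hherm
  rw [mpinv, dif_pos h]
  exact h.choose_spec

/-- `M^{1/2} Z_S M^{1/2}` is idempotent, hence its eigenvalues are 0 or 1. -/
theorem stmt6 {m n p : ℕ} (A : Matrix (Fin m) (Fin n) ℝ)
    (M : Matrix (Fin n) (Fin n) ℝ) (hM : M.PosDef)
    (S : Matrix (Fin n) (Fin p) ℝ)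
    (Q : Matrix (Fin n) (Fin n) ℝ)
    (hQ : Q = posSemidefSqrt hM.posSemidef * Zmat A M S * posSemidefSqrt hM.posSemidef) :
    Q * Q = Q ∧
      ∀ (r : ℝ) (v : Fin n → ℝ), v ≠ 0 → Q.mulVec v = r • v → r = 0 ∨ r = 1 := by
  classical
  set sq : Matrix (Fin n) (Fin n) ℝ := posSemidefSqrt hM.posSemidef with hsq
  have hsqs : sq * sq = M := posSemidefSqrt_mul_self hM.posSemidef
  have hsqt : sqᵀ = sq := by
    have h := posSemidefSqrt_conjTranspose hM.posSemidef
    ext i j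
    have := congrFun (congrFun h i) j
    simpa [Matrix.conjTranspose_apply] using this
  set P : Matrix (Fin p) (Fin p) ℝ := Pmat A S with hP
  set C : Matrix (Fin n) (Fin p) ℝ := sq * S * P with hC
  set N : Matrix (Fin p) (Fin p) ℝ := Pᵀ * Sᵀ * M * S * P with hN
  have hNC : N = Cᵀ * C := by
    rw [hN, hC]
    simp only [Matrix.transpose_mul, hsqt, ← hsqs]
    simp only [Matrix.mul_assoc]
  have hNsymm : Nᵀ = N := by
    rw [hNC]
    simp only [Matrix.transpose_mul, Matrix.transpose_transpose]
  set X : Matrix (Fin p) (Fin p) ℝ := mpinv N with hX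
  have hX2 : X * N * X = X := (mpinv_spec_of_symm N hNsymm).2.1
  have hQC : Q = C * X * Cᵀ := by
    rw [hQ, Zmat, hC]
    simp only [Matrix.transpose_mul, hsqt, ← hP, ← hN, ← hX]
    simp only [Matrix.mul_assoc]
  have hidem : Q * Q = Q := by
    rw [hQC]
    calc (C * X * Cᵀ) * (C * X * Cᵀ) = C * (X * N * X) * Cᵀ := by
          rw [hNC]; simp only [Matrix.mul_assoc]
      _ = C * X * Cᵀ := by rw [hX2]
  refine ⟨hidem, ?_⟩
  intro r v hv hQv
  have h1 : (r * r) • v = r • v := by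
    have h2 : Q.mulVec (Q.mulVec v) = (Q * Q).mulVec v := Matrix.mulVec_mulVec v Q Q
    rw [hidem, hQv, Matrix.mulVec_smul, hQv, smul_smul] at h2
    exact h2
  have h3 : (r * r - r) • v = 0 := by
    rw [sub_smul, h1, sub_self]
  rcases smul_eq_zero.mp h3 with h4 | h4
  · have h5 : r * (r - 1) = 0 := by ring_nf; linarith [h4]
    rcases mul_eq_zero.mp h5 with h6 | h6
    · exact Or.inl h6
    · exact Or.inr (by linarith)
  · exact absurd h4 hv
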